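/- Assume X is functorially finite in C, C is Krull–Schmidt (every object is a finite direct sum of objects whose endomorphism rings are local), and C has Auslander–Reiten triangles: for every indecomposable object Z there is a distinguished triangle τZ --f--> E --g--> Z → (τZ)⟦1⟧ in which f is a source morphism (f is not a split monomorphism, every morphism out of τZ that is not a split monomorphism factors through f, and any endomorphism φ of E with φ ∘ f = f is an automorphism) and g is a sink morphism (the dual notion). Then (C, C) is an X-mutation pair if and only if τX = X. -/

import Mathlib

/-!
Common definitions: the ideal of morphisms factoring through a subcategory `X`
(given as a set of objects of `C`), `X`-monic and `X`-epic morphisms, left and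
right `X`-approximations, additive subcategories closed under isomorphisms,
direct sums and direct summands, and the additive quotient category `C/X`
(realized via `CategoryTheory.Quotient` of the relation `xRel X`).
-/

open CategoryTheory Category Limits Pretriangulated

universe v u

namespace PaperStmt

variable {C : Type u} [Category.{v} C]

/-- `f` factors through an object of `X`. -/
def FactorsThru (X : Set C) {A B : C} (f : A ⟶ B) : Prop :=
  ∃ (M : C) (g : A ⟶ M) (h : M ⟶ B), M ∈ X ∧ g ≫ h = f

/-- `f : A ⟶ B` is `X`-monic: the map `Hom(B, X') → Hom(A, X')`, `g ↦ g ∘ f`,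
is surjective for every object `X'` of `X`. -/
def IsXMonic (X : Set C) {A B : C} (f : A ⟶ B) : Prop :=
  ∀ ⦃X' : C⦄, X' ∈ X → ∀ g : A ⟶ X', ∃ h : B ⟶ X', f ≫ h = g

/-- `f : A ⟶ B` is `X`-epic: the map `Hom(X', A) → Hom(X', B)`, `g ↦ f ∘ g`,
is surjective for every object `X'` of `X`. -/
def IsXEpic (X : Set C) {A B : C} (f : A ⟶ B) : Prop :=
  ∀ ⦃X' : C⦄, X' ∈ X → ∀ g : X' ⟶ B, ∃ h : X' ⟶ A, h ≫ f = g

/-- `α : A ⟶ X₀` is a left `X`-approximation of `A`: `X₀` lies in `X` and every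
morphism from `A` to an object of `X` factors through `α`. -/
def IsLeftApprox (X : Set C) {A X₀ : C} (α : A ⟶ X₀) : Prop :=
  X₀ ∈ X ∧ IsXMonic X α

/-- `β : X₀ ⟶ B` is a right `X`-approximation of `B`: `X₀` lies in `X` and every
morphism from an object of `X` to `B` factors through `β`. -/
def IsRightApprox (X : Set C) {X₀ B : C} (β : X₀ ⟶ B) : Prop :=
  X₀ ∈ X ∧ IsXEpic X β

/-- `X` is (the object class of) a full additive subcategory of `C`, closed
under isomorphisms, finite direct sums and direct summands. -/
structure IsAdditiveClosedSubcat [Preadditive C] [HasBinaryBiproducts C] (X : Set C) :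
    Prop where
  zero_mem : ∀ Z : C, IsZero Z → Z ∈ X
  iso_closed : ∀ {A B : C}, (A ≅ B) → A ∈ X → B ∈ X
  sum_closed : ∀ {A B : C}, A ∈ X → B ∈ X → (A ⊞ B) ∈ X
  summand_closed : ∀ {A B : C}, (A ⊞ B) ∈ X → A ∈ X

/-- Two morphisms are identified in the quotient category `C/X` precisely when
their difference factors through an object of `X`. -/
def xRel [Preadditive C] (X : Set C) : HomRel C :=
  fun _ _ f g => FactorsThru X (f - g)

section Triangulated

variable [Preadditive C] [HasZeroObject C] [HasShift C ℤ]
  [∀ n : ℤ, (shiftFunctor C n).Additive] [Pretriangulated C]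

/-- `(𝒜, ℬ)` is an `X`-mutation pair in the triangulated category `C`. -/
def IsMutationPair (X 𝒜 ℬ : Set C) : Prop :=
  X ⊆ 𝒜 ∧ X ⊆ ℬ ∧
  (∀ A ∈ 𝒜, ∃ (X₀ B' : C) (α : A ⟶ X₀) (β : X₀ ⟶ B') (δ : B' ⟶ A⟦(1 : ℤ)⟧),
      B' ∈ ℬ ∧ (Triangle.mk α β δ ∈ distTriang C) ∧
      IsLeftApprox X α ∧ IsRightApprox X β) ∧
  (∀ B ∈ ℬ, ∃ (A' X₀ : C) (α : A' ⟶ X₀) (β : X₀ ⟶ B) (δ : B ⟶ A'⟦(1 : ℤ)⟧),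
      A' ∈ 𝒜 ∧ (Triangle.mk α β δ ∈ distTriang C) ∧
      IsLeftApprox X α ∧ IsRightApprox X β)

end Triangulated

/-- `f : A ⟶ B` is a source morphism (minimal left almost split morphism). -/
def IsSourceMorphism {A B : C} (f : A ⟶ B) : Prop :=
  (¬ ∃ r : B ⟶ A, f ≫ r = 𝟙 A) ∧
  (∀ ⦃W : C⦄ (u : A ⟶ W), (¬ ∃ r : W ⟶ A, u ≫ r = 𝟙 A) → ∃ u' : B ⟶ W, f ≫ u' = u) ∧
  (∀ φ : B ⟶ B, f ≫ φ = f → IsIso φ)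

/-- `g : B ⟶ Z` is a sink morphism (minimal right almost split morphism). -/
def IsSinkMorphism {B Z : C} (g : B ⟶ Z) : Prop :=
  (¬ ∃ s : Z ⟶ B, s ≫ g = 𝟙 Z) ∧
  (∀ ⦃W : C⦄ (v : W ⟶ Z), (¬ ∃ s : Z ⟶ W, s ≫ v = 𝟙 Z) → ∃ v' : W ⟶ B, v' ≫ g = v) ∧
  (∀ φ : B ⟶ B, φ ≫ g = g → IsIso φ)

section AuxLemmas

variable [Preadditive C]

section Split

variable [HasZeroObject C] [HasShift C ℤ]
  [∀ n : ℤ, (shiftFunctor C n).Additive] [Pretriangulated C] [HasBinaryBiproducts C]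

/-- A distinguished triangle with vanishing third morphism splits. -/
lemma exists_biprod_iso_of_mor₃_zero (T : Triangle C) (hT : T ∈ distTriang C)
    (h0 : T.mor₃ = 0) : Nonempty (T.obj₁ ⊞ T.obj₃ ≅ T.obj₂) := by
  obtain ⟨s, hs⟩ := Triangle.coyoneda_exact₃ T hT (𝟙 T.obj₃) (by rw [h0, comp_zero])
  let φ : binaryBiproductTriangle T.obj₁ T.obj₃ ⟶ T :=
    { hom₁ := 𝟙 _
      hom₂ := biprod.desc T.mor₁ s
      hom₃ := 𝟙 _
      comm₁ := by show biprod.inl ≫ biprod.desc T.mor₁ s = 𝟙 T.obj₁ ≫ T.mor₁; simp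
      comm₂ := by
        show biprod.snd ≫ 𝟙 T.obj₃ = biprod.desc T.mor₁ s ≫ T.mor₂
        apply biprod.hom_ext'
        · simp [comp_distTriang_mor_zero₁₂ T hT]
        · simp [← hs]
      comm₃ := by show (0 : T.obj₃ ⟶ _) ≫ (𝟙 T.obj₁)⟦(1 : ℤ)⟧' = 𝟙 T.obj₃ ≫ T.mor₃; simp [h0] }
  have : IsIso φ.hom₂ :=
    isIso₂_of_isIso₁₃ φ (binaryBiproductTriangle_distinguished T.obj₁ T.obj₃) hT
      (by dsimp [φ]; exact IsIso.id _) (by dsimp [φ]; exact IsIso.id _)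
  exact ⟨@asIso _ _ _ _ _ this⟩

end Split

section Biproducts

variable [HasFiniteBiproducts C] [HasBinaryBiproducts C]

/-- Splitting off the `i`-th summand of a finite biproduct. -/
noncomputable def biprodSuccAboveIso {n : ℕ} (f : Fin (n + 1) → C) (i : Fin (n + 1)) :
    (⨁ f) ≅ (f i) ⊞ (⨁ fun j => f (i.succAbove j)) where
  hom := biprod.lift (biproduct.π f i)
    (biproduct.lift fun j => biproduct.π f (i.succAbove j))
  inv := biprod.desc (biproduct.ι f i)
    (biproduct.desc fun j => biproduct.ι f (i.succAbove j))
  hom_inv_id := by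
    rw [biprod.lift_desc, biproduct.lift_desc, ← biproduct.total]
    exact (Fin.sum_univ_succAbove
      (fun j => biproduct.π f j ≫ biproduct.ι f j) i).symm
  inv_hom_id := by
    apply biprod.hom_ext'
    · apply biprod.hom_ext
      · simp
      · apply biproduct.hom_ext
        intro j
        simp [biproduct.ι_π_ne f (Fin.ne_succAbove i j)]
    · apply biprod.hom_ext
      · apply biproduct.hom_ext'
        intro j
        simp [biproduct.ι_π_ne f (Fin.succAbove_ne i j)]
      · apply biproduct.hom_ext'
        intro j
        apply biproduct.hom_ext
        intro j'
        by_cases hjj : j = j'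
        · subst hjj; simp
        · simp [biproduct.ι_π_ne f (fun h => hjj (Fin.succAbove_right_injective h)),
            biproduct.ι_π_ne _ hjj]

lemma mem_biproduct (X : Set C) (hX : IsAdditiveClosedSubcat X) :
    ∀ {n : ℕ} (f : Fin n → C), (∀ i, f i ∈ X) → (⨁ f) ∈ X := by
  intro n
  induction n with
  | zero =>
    intro f _
    refine hX.zero_mem _ ?_
    rw [IsZero.iff_id_eq_zero]
    exact biproduct.hom_ext _ _ (fun j => j.elim0)
  | succ n ih =>
    intro f hf
    exact hX.iso_closed (biprodSuccAboveIso f 0).symm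
      (hX.sum_closed (hf 0) (ih _ (fun j => hf _)))

lemma mem_of_biproduct_mem (X : Set C) (hX : IsAdditiveClosedSubcat X)
    {n : ℕ} (f : Fin n → C) (h : (⨁ f) ∈ X) (i : Fin n) : f i ∈ X := by
  obtain _ | m := n
  · exact i.elim0
  · exact hX.summand_closed (hX.iso_closed (biprodSuccAboveIso f i) h)

end Biproducts

end AuxLemmas

/-- in a Krull–Schmidt, `k`-linear, Hom-finite triangulated
category with Auslander–Reiten (Serre) duality and Auslander–Reiten triangles,
if `X` is functorially finite then `(C, C)` is an `X`-mutation pair if and only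
if `τX = X`. -/
theorem statement12 [Preadditive C] [HasZeroObject C] [HasShift C ℤ]
    [∀ n : ℤ, (shiftFunctor C n).Additive] [Pretriangulated C] [HasBinaryBiproducts C]
    [HasFiniteBiproducts C]
    (k : Type*) [Field k] [CategoryTheory.Linear k C]
    [∀ A B : C, FiniteDimensional k (A ⟶ B)]
    (τ : C ⥤ C) [τ.Additive] [τ.IsEquivalence]
    (e : ∀ A B : C, (A ⟶ (B⟦(1 : ℤ)⟧)) ≃ₗ[k] ((B ⟶ τ.obj A) →ₗ[k] k))
    (he₁ : ∀ {A' A B : C} (f : A' ⟶ A) (φ : A ⟶ (B⟦(1 : ℤ)⟧)) (g : B ⟶ τ.obj A'),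
      e A' B (f ≫ φ) g = e A B φ (g ≫ τ.map f))
    (he₂ : ∀ {A B B' : C} (h : B ⟶ B') (φ : A ⟶ (B⟦(1 : ℤ)⟧)) (g : B' ⟶ τ.obj A),
      e A B' (φ ≫ (h⟦(1 : ℤ)⟧')) g = e A B φ (h ≫ g))
    (X : Set C) (hX : IsAdditiveClosedSubcat X)
    -- `X` is functorially finite
    (hcov : ∀ A : C, ∃ (X₀ : C) (α : A ⟶ X₀), IsLeftApprox X α)
    (hcontra : ∀ B : C, ∃ (X₀ : C) (β : X₀ ⟶ B), IsRightApprox X β)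
    -- `C` is Krull–Schmidt
    (hKS : ∀ A : C, ∃ (n : ℕ) (f : Fin n → C),
      (∀ i, IsLocalRing (End (f i))) ∧ Nonempty (A ≅ ⨁ f))
    -- `C` has Auslander–Reiten triangles
    (hAR : ∀ Z : C, IsLocalRing (End Z) →
      ∃ (E : C) (f : τ.obj Z ⟶ E) (g : E ⟶ Z) (h : Z ⟶ ((τ.obj Z)⟦(1 : ℤ)⟧)),
        (Triangle.mk f g h ∈ distTriang C) ∧ IsSourceMorphism f ∧ IsSinkMorphism g) :
    IsMutationPair X Set.univ Set.univ ↔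
      ((∀ X' ∈ X, τ.obj X' ∈ X) ∧ (∀ X' ∈ X, ∃ Y ∈ X, Nonempty (τ.obj Y ≅ X'))) := by
  constructor
  · rintro ⟨-, -, hmut₃, hmut₄⟩
    -- Key step 1: `Z` indecomposable, `Z ∈ X` implies `τ Z ∈ X`.
    have key₁ : ∀ Z : C, IsLocalRing (End Z) → Z ∈ X → τ.obj Z ∈ X := by
      intro Z hZ hZX
      obtain ⟨E, f, g, h, hT, hf, hg⟩ := hAR Z hZ
      obtain ⟨X₀, B', α, β, δ, -, hT', hα, hβ⟩ := hmut₃ (τ.obj Z) trivial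
      -- the AR triangle does not split
      have hne : h ≠ 0 := by
        intro h0
        obtain ⟨s, hs⟩ := Triangle.coyoneda_exact₃ _ hT (𝟙 Z) (by
          change 𝟙 Z ≫ h = 0; rw [h0, comp_zero])
        exact hg.1 ⟨s, hs.symm⟩
      by_cases hsplit : ∃ r : X₀ ⟶ τ.obj Z, α ≫ r = 𝟙 (τ.obj Z)
      · -- `α` split mono: `τ Z` is a direct summand of `X₀ ∈ X`
        obtain ⟨r, hr⟩ := hsplit
        have h31 := comp_distTriang_mor_zero₃₁ _ hT'
        change δ ≫ α⟦(1 : ℤ)⟧' = 0 at h31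
        have hδ : δ = 0 := by
          have : δ ≫ (α ≫ r)⟦(1 : ℤ)⟧' = 0 := by
            rw [Functor.map_comp, ← assoc, h31, zero_comp]
          rw [hr] at this
          simpa using this
        obtain ⟨iso⟩ := exists_biprod_iso_of_mor₃_zero _ hT' hδ
        exact hX.summand_closed (hX.iso_closed iso.symm hα.1)
      · -- otherwise `α` factors through the source morphism, contradiction
        exfalso
        obtain ⟨α', hα'⟩ := hf.2.1 α hsplit
        have h31 := comp_distTriang_mor_zero₃₁ _ hT
        change h ≫ f⟦(1 : ℤ)⟧' = 0 at h31
        have h1 : h ≫ α⟦(1 : ℤ)⟧' = 0 := by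
          rw [← hα', Functor.map_comp, ← assoc, h31, zero_comp]
        obtain ⟨t, ht⟩ := Triangle.coyoneda_exact₁ _ hT' h h1
        change Z ⟶ B' at t
        change h = t ≫ δ at ht
        obtain ⟨t', ht'⟩ := hβ.2 hZX t
        have h23 := comp_distTriang_mor_zero₂₃ _ hT'
        change β ≫ δ = 0 at h23
        apply hne
        rw [ht, ← ht', assoc, h23, comp_zero]
    -- Key step 2: `Z` indecomposable, `τ Z ∈ X` implies `Z ∈ X`.
    have key₂ : ∀ Z : C, IsLocalRing (End Z) → τ.obj Z ∈ X → Z ∈ X := by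
      intro Z hZ hτZ
      obtain ⟨E, f, g, h, hT, hf, hg⟩ := hAR Z hZ
      obtain ⟨A', X₀, α, β, δ, -, hT', hα, hβ⟩ := hmut₄ Z trivial
      have hne : h ≠ 0 := by
        intro h0
        obtain ⟨r, hr⟩ := Triangle.yoneda_exact₂ _
          (inv_rot_of_distTriang _ hT) (𝟙 (τ.obj Z)) (by
            dsimp [Triangle.invRotate]
            show (-(shiftFunctor C (-1 : ℤ)).map h ≫ (shiftFunctorCompIsoId C (1 : ℤ) (-1) (by omega)).hom.app (τ.obj Z)) ≫ 𝟙 (τ.obj Z) = 0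
            rw [h0]
            simp)
        exact hf.1 ⟨r, hr.symm⟩
      by_cases hsplit : ∃ s : Z ⟶ X₀, s ≫ β = 𝟙 Z
      · obtain ⟨s, hs⟩ := hsplit
        have h23 := comp_distTriang_mor_zero₂₃ _ hT'
        change β ≫ δ = 0 at h23
        have hδ : δ = 0 := by
          calc δ = (s ≫ β) ≫ δ := by rw [hs, id_comp]
          _ = s ≫ (β ≫ δ) := by rw [assoc]
          _ = 0 := by rw [h23, comp_zero]
        obtain ⟨iso⟩ := exists_biprod_iso_of_mor₃_zero _ hT' hδ
        exact hX.summand_closed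
          (hX.iso_closed (biprod.braiding A' Z)
            (hX.iso_closed iso.symm hβ.1))
      · exfalso
        obtain ⟨β', hβ'⟩ := hg.2.1 β hsplit
        have h23 := comp_distTriang_mor_zero₂₃ _ hT
        change g ≫ h = 0 at h23
        have h1 : β ≫ h = 0 := by
          rw [← hβ', assoc, h23, comp_zero]
        obtain ⟨w, hw⟩ := Triangle.yoneda_exact₃ _ hT' h h1
        change h = δ ≫ w at hw
        obtain ⟨u, rfl⟩ := (shiftFunctor C (1 : ℤ)).map_surjective w
        change A' ⟶ τ.obj Z at u
        change h = δ ≫ u⟦(1 : ℤ)⟧' at hw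
        obtain ⟨v, hv⟩ := hα.2 hτZ u
        have h31 := comp_distTriang_mor_zero₃₁ _ hT'
        change δ ≫ α⟦(1 : ℤ)⟧' = 0 at h31
        apply hne
        rw [hw, ← hv, Functor.map_comp, ← assoc, h31, zero_comp]
    constructor
    · intro X' hX'
      obtain ⟨n, f, hloc, ⟨ψ⟩⟩ := hKS X'
      have hsum : (⨁ f) ∈ X := hX.iso_closed ψ hX'
      have hτfi : ∀ i, τ.obj (f i) ∈ X := fun i =>
        key₁ (f i) (hloc i) (mem_of_biproduct_mem X hX f hsum i)
      have hτsum : τ.obj (⨁ f) ∈ X :=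
        hX.iso_closed (τ.mapBiproduct f).symm (mem_biproduct X hX _ hτfi)
      exact hX.iso_closed (τ.mapIso ψ).symm hτsum
    · intro X' hX'
      obtain ⟨n, f, hloc, ⟨ψ⟩⟩ := hKS (τ.inv.obj X')
      have hcount : τ.obj (τ.inv.obj X') ≅ X' := τ.objObjPreimageIso X'
      have hτW : τ.obj (τ.inv.obj X') ∈ X := hX.iso_closed hcount.symm hX'
      have hsum : (⨁ (τ.obj ∘ f)) ∈ X :=
        hX.iso_closed (τ.mapBiproduct f) (hX.iso_closed (τ.mapIso ψ) hτW)
      have hfi : ∀ i, f i ∈ X := fun i =>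
        key₂ (f i) (hloc i) (mem_of_biproduct_mem X hX _ hsum i)
      exact ⟨τ.inv.obj X', hX.iso_closed ψ.symm (mem_biproduct X hX f hfi), ⟨hcount⟩⟩
  · rintro ⟨hτ₁, hτ₂⟩
    refine ⟨fun _ _ => trivial, fun _ _ => trivial, ?_, ?_⟩
    · -- first triangle: complete a left `X`-approximation
      intro A _
      obtain ⟨X₀, α, hα⟩ := hcov A
      obtain ⟨B', β, δ, hT⟩ := distinguished_cocone_triangle α
      refine ⟨X₀, B', α, β, δ, trivial, hT, hα, hα.1, ?_⟩
      intro X'' hX'' g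
      have h31 := comp_distTriang_mor_zero₃₁ _ hT
      change δ ≫ α⟦(1 : ℤ)⟧' = 0 at h31
      have hzero : g ≫ δ = 0 := by
        apply (e X'' A).injective
        rw [map_zero]
        ext u
        obtain ⟨v, hv⟩ := hα.2 (hτ₁ X'' hX'') u
        have h2 : (g ≫ δ) ≫ α⟦(1 : ℤ)⟧' = 0 := by
          rw [assoc, h31, comp_zero]
        calc (e X'' A) (g ≫ δ) u = (e X'' A) (g ≫ δ) (α ≫ v) := by rw [hv]
        _ = (e X'' X₀) ((g ≫ δ) ≫ α⟦(1 : ℤ)⟧') v := (he₂ α (g ≫ δ) v).symm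
        _ = 0 := by rw [h2, map_zero]; rfl
      obtain ⟨g', hg'⟩ := Triangle.coyoneda_exact₃ _ hT g hzero
      exact ⟨g', hg'.symm⟩
    · -- second triangle: complete a right `X`-approximation
      intro B _
      obtain ⟨X₀, β, hβ⟩ := hcontra B
      obtain ⟨A', α, δ, hT⟩ := distinguished_cocone_triangle₁ β
      refine ⟨A', X₀, α, β, δ, trivial, hT, ⟨hβ.1, ?_⟩, hβ⟩
      intro X'' hX'' u
      have h23 := comp_distTriang_mor_zero₂₃ _ hT
      change β ≫ δ = 0 at h23
      have hzero : δ ≫ u⟦(1 : ℤ)⟧' = 0 := by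
        apply (e B X'').injective
        rw [map_zero]
        ext w
        obtain ⟨Y, hY, ⟨ψ⟩⟩ := hτ₂ X'' hX''
        obtain ⟨t, ht⟩ := τ.map_surjective (ψ.hom ≫ w)
        obtain ⟨t', ht'⟩ := hβ.2 hY t
        have hw : w = (ψ.inv ≫ τ.map t') ≫ τ.map β := by
          calc w = ψ.inv ≫ (ψ.hom ≫ w) := by rw [← assoc, ψ.inv_hom_id, id_comp]
          _ = ψ.inv ≫ τ.map t := by rw [ht]
          _ = ψ.inv ≫ τ.map t' ≫ τ.map β := by rw [← τ.map_comp, ht']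
          _ = (ψ.inv ≫ τ.map t') ≫ τ.map β := by rw [assoc]
        calc (e B X'') (δ ≫ u⟦(1 : ℤ)⟧') w = (e B A') δ (u ≫ w) := he₂ u δ w
        _ = (e X₀ A') (β ≫ δ) (u ≫ ψ.inv ≫ τ.map t') := by
            rw [hw, ← assoc, he₁ β δ (u ≫ ψ.inv ≫ τ.map t'), assoc, assoc]
        _ = 0 := by rw [h23, map_zero]; rfl
      obtain ⟨w', hw'⟩ := Triangle.yoneda_exact₃ _ (rot_of_distTriang _ hT)
        (u⟦(1 : ℤ)⟧') (by exact hzero)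
      obtain ⟨v, rfl⟩ := (shiftFunctor C (1 : ℤ)).map_surjective w'
      change X₀ ⟶ X'' at v
      refine ⟨-v, (shiftFunctor C (1 : ℤ)).map_injective ?_⟩
      change u⟦(1 : ℤ)⟧' = (-(α⟦(1 : ℤ)⟧')) ≫ v⟦(1 : ℤ)⟧' at hw'
      rw [Functor.map_comp, Functor.map_neg, hw', Preadditive.neg_comp,
        Preadditive.comp_neg]

end PaperStmt
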